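/- Fix τ > 0 and positive integers a₁, ..., aₙ. Let Jₙ = ⋃_{(1/4)qₙ^τ ≤ a_{n+1} ≤ (1/2)qₙ^τ} I_{n+1}(a₁,...,aₙ,a_{n+1}). Then, assuming qₙ^τ ≥ 8, we have 1/((3/2)·qₙ^{2+τ}) ≤ |Jₙ| ≤ 1/((1/4)·qₙ^{2+τ}). -/

import Mathlib

open Set MeasureTheory Filter

/-- The Gauss map `T(x) = 1/x - ⌊1/x⌋` (with `T 0 = 0`). -/
noncomputable def gaussMap (x : ℝ) : ℝ := Int.fract x⁻¹

/-- The `n`-th partial quotient `aₙ(x)` (indexed from `n = 1`). -/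
noncomputable def cfA (x : ℝ) (n : ℕ) : ℕ := ⌊(gaussMap^[n - 1] x)⁻¹⌋₊

/-- Numerators `pₙ` of the convergents of `[b 1, b 2, ...]`:
`p₀ = 0`, `p₁ = 1` (since `p₋₁ = 1`), `p_{n+2} = b (n+2) p_{n+1} + pₙ`. -/
def cfP (b : ℕ → ℕ) : ℕ → ℕ
  | 0 => 0
  | 1 => 1
  | n + 2 => b (n + 2) * cfP b (n + 1) + cfP b n

/-- Denominators (continuants) `qₙ` of the convergents of `[b 1, b 2, ...]`:
`q₀ = 1`, `q₁ = b 1`, `q_{n+2} = b (n+2) q_{n+1} + qₙ`. -/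
def cfQ (b : ℕ → ℕ) : ℕ → ℕ
  | 0 => 1
  | 1 => b 1
  | n + 2 => b (n + 2) * cfQ b (n + 1) + cfQ b n

/-- The cylinder `Iₙ(b 1, ..., b n)` of order `n`. -/
noncomputable def cfCyl (b : ℕ → ℕ) (n : ℕ) : Set ℝ :=
  {x ∈ Set.Ico (0 : ℝ) 1 | ∀ i, 1 ≤ i → i ≤ n → cfA x i = b i}

lemma cfQ_pos (b : ℕ → ℕ) : ∀ k, (∀ i, 1 ≤ i → i ≤ k → 1 ≤ b i) → 1 ≤ cfQ b k
  | 0, _ => le_refl 1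
  | 1, h => h 1 le_rfl le_rfl
  | (k+2), h => by
      have h1 := cfQ_pos b (k+1) (fun i hi hik => h i hi (by omega))
      have h2 := h (k+2) (by omega) le_rfl
      have h3 := Nat.mul_le_mul h2 h1
      show 1 ≤ b (k+2) * cfQ b (k+1) + cfQ b k
      omega

lemma cfQ_le_succ (b : ℕ → ℕ) (k : ℕ) (hb : ∀ i, 1 ≤ i → i ≤ k+1 → 1 ≤ b i) :
    cfQ b k ≤ cfQ b (k+1) := by
  match k with
  | 0 => exact hb 1 le_rfl le_rfl
  | (k+1) =>
    have h2 := hb (k+2) (by omega) le_rfl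
    have h1 := cfQ_pos b (k+1) (fun i hi hik => hb i hi (by omega))
    have h3 := Nat.mul_le_mul h2 (le_refl (cfQ b (k+1)))
    show cfQ b (k+1) ≤ b (k+2) * cfQ b (k+1) + cfQ b k
    omega

lemma cfP_congr (b c : ℕ → ℕ) : ∀ k, (∀ i, i ≤ k → b i = c i) → cfP b k = cfP c k
  | 0, _ => rfl
  | 1, _ => rfl
  | (k+2), h => by
      rw [cfP, cfP, h (k+2) le_rfl, cfP_congr b c (k+1) (fun i hi => h i (by omega)),
        cfP_congr b c k (fun i hi => h i (by omega))]

lemma cfQ_congr (b c : ℕ → ℕ) : ∀ k, (∀ i, i ≤ k → b i = c i) → cfQ b k = cfQ c k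
  | 0, _ => rfl
  | 1, h => by rw [cfQ, cfQ, h 1 le_rfl]
  | (k+2), h => by
      rw [cfQ, cfQ, h (k+2) le_rfl, cfQ_congr b c (k+1) (fun i hi => h i (by omega)),
        cfQ_congr b c k (fun i hi => h i (by omega))]

lemma cf_det (b : ℕ → ℕ) : ∀ k, (cfP b (k+1) : ℤ) * cfQ b k - (cfP b k : ℤ) * cfQ b (k+1) = (-1)^k
  | 0 => by simp [cfP, cfQ]
  | (k+1) => by
      have ih := cf_det b k
      show (cfP b (k+2) : ℤ) * cfQ b (k+1) - (cfP b (k+1) : ℤ) * cfQ b (k+2) = (-1)^(k+1)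
      rw [cfP, cfQ]
      push_cast
      linear_combination (-1 : ℤ) * ih

noncomputable def cfMap (b : ℕ → ℕ) (m : ℕ) (θ : ℝ) : ℝ :=
  ((cfP b m : ℝ) + (cfP b (m-1) : ℝ) * θ) / ((cfQ b m : ℝ) + (cfQ b (m-1) : ℝ) * θ)

lemma cfMap_succ (b : ℕ → ℕ) (m : ℕ) (hb : ∀ i, 1 ≤ i → i ≤ m+1 → 1 ≤ b i)
    (hc : 1 ≤ b (m+2)) (θ : ℝ) (hθ : 0 ≤ θ) :
    cfMap b (m+2) θ = cfMap b (m+1) (1/((b (m+2) : ℝ) + θ)) := by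
  have hQ1 : (1:ℝ) ≤ cfQ b (m+1) := by exact_mod_cast cfQ_pos b (m+1) hb
  have hQ0 : (0:ℝ) ≤ cfQ b m := by positivity
  have hc' : (1:ℝ) ≤ b (m+2) := by exact_mod_cast hc
  have hd0 : (0:ℝ) < (b (m+2) : ℝ) + θ := by linarith
  have hd1 : (0:ℝ) < (cfQ b (m+1) : ℝ) + (cfQ b m : ℝ) * (1/((b (m+2) : ℝ) + θ)) := by
    have : (0:ℝ) ≤ (cfQ b m : ℝ) * (1/((b (m+2) : ℝ) + θ)) := by positivity
    linarith
  have hd2 : (0:ℝ) < (cfQ b (m+2) : ℝ) + (cfQ b (m+1) : ℝ) * θ := by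
    have h1 : (cfQ b (m+1) : ℝ) ≤ cfQ b (m+2) := by
      have : cfQ b (m+1) ≤ b (m+2) * cfQ b (m+1) + cfQ b m := by
        have := Nat.mul_le_mul hc (le_refl (cfQ b (m+1))); omega
      rw [cfQ]; exact_mod_cast this
    nlinarith
  show ((cfP b (m+2) : ℝ) + (cfP b (m+1) : ℝ) * θ) / ((cfQ b (m+2) : ℝ) + (cfQ b (m+1) : ℝ) * θ)
      = ((cfP b (m+1) : ℝ) + (cfP b m : ℝ) * (1/((b (m+2) : ℝ) + θ)))
        / ((cfQ b (m+1) : ℝ) + (cfQ b m : ℝ) * (1/((b (m+2) : ℝ) + θ)))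
  rw [cfP, cfQ]
  rw [div_eq_div_iff (by push_cast; push_cast at hd2; rw [cfQ] at hd2; push_cast at hd2; linarith) hd1.ne']
  push_cast
  field_simp
  ring

lemma gauss_eval (c : ℕ) (θ : ℝ) (hθ0 : 0 ≤ θ) (hθ1 : θ < 1)
    (hd : (1:ℝ) < (c:ℝ) + θ) :
    (1/((c:ℝ) + θ)) ∈ Ioo (0:ℝ) 1 ∧ gaussMap (1/((c:ℝ) + θ)) = θ ∧
      ⌊(1/((c:ℝ) + θ))⁻¹⌋₊ = c := by
  have hdpos : (0:ℝ) < (c:ℝ) + θ := by linarith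
  have hinv : (1/((c:ℝ) + θ))⁻¹ = (c:ℝ) + θ := by
    rw [one_div, inv_inv]
  refine ⟨⟨by positivity, ?_⟩, ?_, ?_⟩
  · rw [div_lt_one hdpos]; linarith
  · show Int.fract (1/((c:ℝ) + θ))⁻¹ = θ
    rw [hinv]
    have : ((c:ℝ) + θ) = ((c:ℤ) : ℝ) + θ := by push_cast; ring
    rw [this, Int.fract_intCast_add, Int.fract_eq_self.mpr ⟨hθ0, hθ1⟩]
  · rw [hinv]
    rw [Nat.floor_eq_iff (by positivity)]
    constructor
    · linarith
    · push_cast; linarith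

lemma cfMap_mem (b : ℕ → ℕ) : ∀ m, 1 ≤ m → (∀ i, 1 ≤ i → i ≤ m → 1 ≤ b i) →
    ∀ θ, θ ∈ Ioo (0:ℝ) 1 →
    cfMap b m θ ∈ Ioo (0:ℝ) 1 ∧ gaussMap^[m] (cfMap b m θ) = θ ∧
      ∀ i, 1 ≤ i → i ≤ m → cfA (cfMap b m θ) i = b i
  | 0, h, _, _, _ => absurd h (by norm_num)
  | 1, _, hb, θ, hθ => by
      have hb1 : 1 ≤ b 1 := hb 1 le_rfl le_rfl
      have hb1' : (1:ℝ) ≤ b 1 := by exact_mod_cast hb1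
      have hkey : cfMap b 1 θ = 1/((b 1 : ℝ) + θ) := by
        show ((cfP b 1 : ℝ) + (cfP b 0 : ℝ) * θ) / ((cfQ b 1 : ℝ) + (cfQ b 0 : ℝ) * θ) = _
        rw [show cfP b 1 = 1 from rfl, show cfP b 0 = 0 from rfl,
          show cfQ b 1 = b 1 from rfl, show cfQ b 0 = 1 from rfl]
        push_cast; ring
      obtain ⟨h1, h2, h3⟩ := gauss_eval (b 1) θ hθ.1.le hθ.2 (by linarith [hθ.1])
      rw [hkey]
      refine ⟨h1, by simpa [Function.iterate_one] using h2, ?_⟩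
      intro i hi1 hi2
      have : i = 1 := le_antisymm hi2 hi1
      subst this
      show ⌊(gaussMap^[0] (1/((b 1:ℝ) + θ)))⁻¹⌋₊ = b 1
      simpa using h3
  | (m+2), _, hb, θ, hθ => by
      have hc : 1 ≤ b (m+2) := hb (m+2) (by omega) le_rfl
      have hc' : (1:ℝ) ≤ b (m+2) := by exact_mod_cast hc
      have hd : (1:ℝ) < (b (m+2) : ℝ) + θ := by linarith [hθ.1]
      obtain ⟨hη, hgη, hfη⟩ := gauss_eval (b (m+2)) θ hθ.1.le hθ.2 hd
      have hb' : ∀ i, 1 ≤ i → i ≤ m+1 → 1 ≤ b i := fun i h1 h2 => hb i h1 (by omega)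
      obtain ⟨ih1, ih2, ih3⟩ := cfMap_mem b (m+1) (by omega) hb' _ hη
      have hkey := cfMap_succ b m hb' hc θ hθ.1.le
      rw [hkey]
      refine ⟨ih1, ?_, ?_⟩
      · rw [Function.iterate_succ_apply', ih2]
        exact hgη
      · intro i hi1 hi2
        rcases Nat.lt_or_ge i (m+2) with h | h
        · exact ih3 i hi1 (by omega)
        · have : i = m+2 := by omega
          subst this
          show ⌊(gaussMap^[m+1] _)⁻¹⌋₊ = b (m+2)
          rw [ih2]
          exact hfη

lemma cyl_sub (b : ℕ → ℕ) (m : ℕ) (x : ℝ) (hx : x ∈ cfCyl b (m+1)) : x ∈ cfCyl b m := by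
  obtain ⟨h1, h2⟩ := hx
  exact ⟨h1, fun i hi1 hi2 => h2 i hi1 (by omega)⟩

lemma cyl_fwd (b : ℕ → ℕ) : ∀ m, 1 ≤ m → (∀ i, 1 ≤ i → i ≤ m → 1 ≤ b i) →
    ∀ x, x ∈ cfCyl b m →
    gaussMap^[m] x ∈ Ico (0:ℝ) 1 ∧ x = cfMap b m (gaussMap^[m] x)
  | 0, h, _, _, _ => absurd h (by norm_num)
  | 1, _, hb, x, hx => by
      obtain ⟨⟨hx0, hx1⟩, hcf⟩ := hx
      have hb1 : 1 ≤ b 1 := hb 1 le_rfl le_rfl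
      have ha : ⌊x⁻¹⌋₊ = b 1 := by
        have := hcf 1 le_rfl le_rfl
        simpa [cfA] using this
      have hxne : x ≠ 0 := by
        intro h; rw [h] at ha; simp at ha; omega
      have hx0' : 0 < x := lt_of_le_of_ne hx0 (Ne.symm hxne)
      have hfl : (b 1 : ℝ) ≤ x⁻¹ ∧ x⁻¹ < (b 1 : ℝ) + 1 := by
        rw [← ha]
        constructor
        · exact Nat.floor_le (by positivity)
        · exact_mod_cast Nat.lt_floor_add_one x⁻¹
      have hfloor : ⌊x⁻¹⌋ = (b 1 : ℤ) := by
        rw [Int.floor_eq_iff]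
        exact ⟨by exact_mod_cast hfl.1, by push_cast; exact hfl.2⟩
      have hT : gaussMap x = x⁻¹ - (b 1 : ℝ) := by
        show Int.fract x⁻¹ = _
        rw [Int.fract, hfloor]; push_cast; ring
      constructor
      · rw [Function.iterate_one, hT]
        constructor <;> [linarith [hfl.1]; linarith [hfl.2]]
      · rw [Function.iterate_one, hT]
        show x = ((cfP b 1 : ℝ) + (cfP b 0 : ℝ) * _) / ((cfQ b 1 : ℝ) + (cfQ b 0 : ℝ) * _)
        rw [show cfP b 1 = 1 from rfl, show cfP b 0 = 0 from rfl,
          show cfQ b 1 = b 1 from rfl, show cfQ b 0 = 1 from rfl]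
        push_cast
        rw [show (1:ℝ) + 0 * (x⁻¹ - (b 1:ℝ)) = 1 by ring,
          show (b 1:ℝ) + 1 * (x⁻¹ - (b 1:ℝ)) = x⁻¹ by ring]
        field_simp
  | (m+1+1), _, hb, x, hx => by
      have hb' : ∀ i, 1 ≤ i → i ≤ m+1 → 1 ≤ b i := fun i h1 h2 => hb i h1 (by omega)
      obtain ⟨hθ, hxeq⟩ := cyl_fwd b (m+1) (by omega) hb' x (cyl_sub b (m+1) x hx)
      set θ := gaussMap^[m+1] x with hθdef
      have hc : 1 ≤ b (m+2) := hb (m+2) (by omega) le_rfl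
      have ha : ⌊θ⁻¹⌋₊ = b (m+2) := by
        have := hx.2 (m+2) (by omega) le_rfl
        exact this
      have hθne : θ ≠ 0 := by
        intro h; rw [h] at ha; simp at ha; omega
      have hθ0 : 0 < θ := lt_of_le_of_ne hθ.1 (Ne.symm hθne)
      have hfl : ((b (m+2) : ℝ)) ≤ θ⁻¹ ∧ θ⁻¹ < (b (m+2) : ℝ) + 1 := by
        rw [← ha]
        exact ⟨Nat.floor_le (by positivity), by exact_mod_cast Nat.lt_floor_add_one θ⁻¹⟩
      have hfloor : ⌊θ⁻¹⌋ = (b (m+2) : ℤ) := by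
        rw [Int.floor_eq_iff]
        exact ⟨by exact_mod_cast hfl.1, by push_cast; exact hfl.2⟩
      have hT : gaussMap θ = θ⁻¹ - (b (m+2) : ℝ) := by
        show Int.fract θ⁻¹ = _
        rw [Int.fract, hfloor]; push_cast; ring
      set θ' := θ⁻¹ - (b (m+2) : ℝ) with hθ'def
      have hit : gaussMap^[m+2] x = θ' := by
        rw [Function.iterate_succ_apply', ← hθdef, hT]
      have hθ'mem : θ' ∈ Ico (0:ℝ) 1 := by
        rw [hθ'def]
        exact ⟨by linarith [hfl.1], by linarith [hfl.2]⟩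
      have hrec : θ = 1/((b (m+2) : ℝ) + θ') := by
        rw [hθ'def]
        have : (b (m+2) : ℝ) + (θ⁻¹ - (b (m+2):ℝ)) = θ⁻¹ := by ring
        rw [this, one_div, inv_inv]
      rw [hit]
      refine ⟨hθ'mem, ?_⟩
      rw [cfMap_succ b m hb' hc θ' hθ'mem.1, ← hrec, ← hxeq]

lemma volume_moeb (p p' q q' : ℝ) (hq : 0 < q) (hq' : 0 ≤ q')
    (he : p' * q - p * q' = 1 ∨ p' * q - p * q' = -1)
    (v u : ℝ) (hv : 0 ≤ v) (hvu : v ≤ u) (s : Set ℝ)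
    (h1 : Ioo v u ⊆ s) (h2 : s ⊆ Icc v u) :
    volume ((fun θ => (p + p' * θ) / (q + q' * θ)) '' s) =
      ENNReal.ofReal ((u - v) / ((q + q' * v) * (q + q' * u))) := by
  set f : ℝ → ℝ := fun θ => (p + p' * θ) / (q + q' * θ) with hf
  have hD : ∀ θ, v ≤ θ → 0 < q + q' * θ := fun θ hθ => by nlinarith
  have hcont : ContinuousOn f (Icc v u) := by
    apply ContinuousOn.div
    · fun_prop
    · fun_prop
    · exact fun θ hθ => (hD θ hθ.1).ne'
  have hdiff : ∀ s t : ℝ, v ≤ s → v ≤ t → f t - f s = (p' * q - p * q') * (t - s) /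
      ((q + q' * s) * (q + q' * t)) := by
    intro s t hs ht
    have h1 := hD s hs
    have h2 := hD t ht
    rw [hf]
    dsimp only
    rw [div_sub_div _ _ h2.ne' h1.ne', div_eq_div_iff (mul_ne_zero h2.ne' h1.ne')
      (mul_ne_zero h1.ne' h2.ne')]
    ring
  have hDv := hD v le_rfl
  have hDu := hD u hvu
  rcases he with he | he
  · -- increasing
    have hmono : ∀ s t : ℝ, v ≤ s → s ≤ t → t ≤ u → f s ≤ f t := by
      intro s t hs hst htu
      have h := hdiff s t hs (le_trans hs hst)
      rw [he, one_mul] at h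
      have h0 : 0 ≤ (t - s) / ((q + q' * s) * (q + q' * t)) :=
        div_nonneg (by linarith) (mul_pos (hD s hs) (hD t (le_trans hs hst))).le
      linarith
    have himg1 : Ioo (f v) (f u) ⊆ f '' s :=
      subset_trans (intermediate_value_Ioo hvu hcont) (Set.image_mono h1)
    have himg2 : f '' s ⊆ Icc (f v) (f u) := by
      intro y ⟨θ, hθ, hy⟩
      have hθ' := h2 hθ
      exact ⟨hy ▸ hmono v θ le_rfl hθ'.1 hθ'.2, hy ▸ hmono θ u hθ'.1 hθ'.2 le_rfl⟩
    have hval : f u - f v = (u - v) / ((q + q' * v) * (q + q' * u)) := by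
      rw [hdiff v u le_rfl hvu, he, one_mul]
    have := le_antisymm (le_trans (measure_mono himg2) (by rw [Real.volume_Icc]))
      (le_trans (by rw [Real.volume_Ioo]) (measure_mono himg1))
    rw [this, hval]
  · -- decreasing
    have hmono : ∀ s t : ℝ, v ≤ s → s ≤ t → t ≤ u → f t ≤ f s := by
      intro s t hs hst htu
      have h := hdiff s t hs (le_trans hs hst)
      rw [he] at h
      have h0 : 0 ≤ (t - s) / ((q + q' * s) * (q + q' * t)) :=
        div_nonneg (by linarith) (mul_pos (hD s hs) (hD t (le_trans hs hst))).le
      have h1 : f t - f s = -((t - s) / ((q + q' * s) * (q + q' * t))) := by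
        rw [h]; ring
      linarith
    have himg1 : Ioo (f u) (f v) ⊆ f '' s :=
      subset_trans (intermediate_value_Ioo' hvu hcont) (Set.image_mono h1)
    have himg2 : f '' s ⊆ Icc (f u) (f v) := by
      intro y ⟨θ, hθ, hy⟩
      have hθ' := h2 hθ
      exact ⟨hy ▸ hmono θ u hθ'.1 hθ'.2 le_rfl, hy ▸ hmono v θ le_rfl hθ'.1 hθ'.2⟩
    have hval : f v - f u = (u - v) / ((q + q' * v) * (q + q' * u)) := by
      rw [hdiff u v hvu le_rfl, he]
      ring
    have := le_antisymm (le_trans (measure_mono himg2) (by rw [Real.volume_Icc]))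
      (le_trans (by rw [Real.volume_Ioo]) (measure_mono himg1))
    rw [this, hval]

lemma arith_low (a β Q Q' X : ℝ) (hQ : 1 ≤ Q) (hQ'1 : 1 ≤ Q') (hQ'Q : Q' ≤ Q)
    (hβ5 : 5 ≤ β) (haβ : a + 1 ≤ β) (h2aβ : 2*a ≤ β + 1)
    (hXβ : 2*(β - 1) ≤ X) (ha2 : 2 ≤ a) :
    1/((3/2)*(Q^2*X)) ≤ (β - a)/((a*Q + Q')*(β*Q + Q')) := by
  have hQ0 : (0:ℝ) < Q := by linarith
  have hX0 : (0:ℝ) < X := by linarith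
  have ha0 : (0:ℝ) < a := by linarith
  have hβ0 : (0:ℝ) < β := by linarith
  have hβa : (0:ℝ) < β - a := by linarith
  have hd1 : (0:ℝ) < a*Q + Q' := by nlinarith
  have hd2 : (0:ℝ) < β*Q + Q' := by nlinarith
  have hD : (0:ℝ) < (a*Q + Q') * (β*Q + Q') := mul_pos hd1 hd2
  rw [div_le_div_iff₀ (by positivity) hD]
  have t1 : a*Q + Q' ≤ (a+1)*Q := by nlinarith
  have t2 : β*Q + Q' ≤ (β+1)*Q := by nlinarith
  have t3 : (a*Q + Q')*(β*Q + Q') ≤ ((a+1)*Q)*((β+1)*Q) :=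
    mul_le_mul t1 t2 hd2.le (by positivity)
  have t4 : 2*((a+1)*(β+1)) ≤ 3*((β-a)*X) := by
    nlinarith [mul_nonneg hβa.le (show (0:ℝ) ≤ X - 2*(β-1) by linarith),
      mul_nonneg (show (0:ℝ) ≤ β-1 by linarith)
        (show (0:ℝ) ≤ 2*(β-a) - (β-1) by linarith),
      mul_nonneg (show (0:ℝ) ≤ β+1 by linarith)
        (show (0:ℝ) ≤ β+1-2*a by linarith),
      mul_nonneg hβ0.le (show (0:ℝ) ≤ β-5 by linarith)]
  nlinarith [t3, t4, sq_nonneg Q, mul_pos hQ0 hQ0]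

lemma arith_high (a β Q Q' X : ℝ) (hQ : 1 ≤ Q) (hQ'1 : 1 ≤ Q') (hQ'Q : Q' ≤ Q)
    (hβ5 : 5 ≤ β) (haβ : a + 1 ≤ β) (hX0 : 0 < X) (hXa : X ≤ 4*a) (ha2 : 2 ≤ a) :
    (β - a)/((a*Q + Q')*(β*Q + Q')) ≤ 1/((1/4)*(Q^2*X)) := by
  have hQ0 : (0:ℝ) < Q := by linarith
  have ha0 : (0:ℝ) < a := by linarith
  have hβ0 : (0:ℝ) < β := by linarith
  have hd1 : (0:ℝ) < a*Q + Q' := by nlinarith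
  have hd2 : (0:ℝ) < β*Q + Q' := by nlinarith
  have hD : (0:ℝ) < (a*Q + Q') * (β*Q + Q') := mul_pos hd1 hd2
  rw [div_le_div_iff₀ hD (by positivity)]
  have h5 : (β-a)*X ≤ β*(4*a) := by nlinarith [mul_nonneg ha0.le hX0.le]
  have h6 : (β-a)*((1/4)*(Q^2*X)) ≤ a*β*Q^2 := by nlinarith [sq_nonneg Q]
  have h7 : a*β*Q^2 ≤ (a*Q + Q')*(β*Q + Q') := by
    nlinarith [mul_nonneg (mul_nonneg ha0.le hQ0.le) (show (0:ℝ) ≤ Q' by linarith),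
      mul_nonneg (mul_nonneg hβ0.le hQ0.le) (show (0:ℝ) ≤ Q' by linarith),
      mul_nonneg (show (0:ℝ) ≤ Q' by linarith) (show (0:ℝ) ≤ Q' by linarith)]
  linarith

set_option maxHeartbeats 1600000 in
theorem fundamental_interval_length_tau (τ : ℝ) (hτ : 0 < τ) (b : ℕ → ℕ) (n : ℕ)
    (hn : 1 ≤ n) (hb : ∀ i, 1 ≤ i → i ≤ n → 1 ≤ b i)
    (hq : 8 ≤ (cfQ b n : ℝ) ^ τ) :
    ENNReal.ofReal (1 / ((3 / 2) * (cfQ b n : ℝ) ^ (2 + τ))) ≤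
      MeasureTheory.volume
        (⋃ j ∈ {j : ℕ | (1 / 4) * (cfQ b n : ℝ) ^ τ ≤ (j : ℝ) ∧
            (j : ℝ) ≤ (1 / 2) * (cfQ b n : ℝ) ^ τ},
          cfCyl (Function.update b (n + 1) j) (n + 1)) ∧
    MeasureTheory.volume
        (⋃ j ∈ {j : ℕ | (1 / 4) * (cfQ b n : ℝ) ^ τ ≤ (j : ℝ) ∧
            (j : ℝ) ≤ (1 / 2) * (cfQ b n : ℝ) ^ τ},
          cfCyl (Function.update b (n + 1) j) (n + 1)) ≤
      ENNReal.ofReal (1 / ((1 / 4) * (cfQ b n : ℝ) ^ (2 + τ))) := by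
  obtain ⟨m, rfl⟩ : ∃ m, n = m + 1 := ⟨n - 1, by omega⟩
  set X : ℝ := (cfQ b (m+1) : ℝ) ^ τ with hXdef
  set J : Set ℝ := (⋃ j ∈ {j : ℕ | (1 / 4) * X ≤ (j : ℝ) ∧ (j : ℝ) ≤ (1 / 2) * X},
      cfCyl (Function.update b (m + 1 + 1) j) (m + 1 + 1)) with hJdef
  -- basic positivity
  have hQn : 1 ≤ cfQ b (m+1) := cfQ_pos b (m+1) hb
  have hQ'n : 1 ≤ cfQ b m := cfQ_pos b m (fun i h1 h2 => hb i h1 (by omega))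
  have hQQ' : cfQ b m ≤ cfQ b (m+1) := cfQ_le_succ b m hb
  set Q : ℝ := (cfQ b (m+1) : ℝ) with hQdef
  set Q' : ℝ := (cfQ b m : ℝ) with hQ'def
  have hQ : (1:ℝ) ≤ Q := by rw [hQdef]; exact_mod_cast hQn
  have hQ' : (1:ℝ) ≤ Q' := by rw [hQ'def]; exact_mod_cast hQ'n
  have hQ'Q : Q' ≤ Q := by rw [hQdef, hQ'def]; exact_mod_cast hQQ'
  have hX : 8 ≤ X := hq
  have hX0 : 0 < X := by linarith
  -- A and B
  set A : ℕ := ⌈(1/4) * X⌉₊ with hAdef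
  set B : ℕ := ⌊(1/2) * X⌋₊ with hBdef
  have hAge : (1/4) * X ≤ (A:ℝ) := Nat.le_ceil _
  have hAlt : (A:ℝ) < (1/4) * X + 1 := Nat.ceil_lt_add_one (by positivity)
  have hBle : (B:ℝ) ≤ (1/2) * X := Nat.floor_le (by positivity)
  have hBgt : (1/2) * X < (B:ℝ) + 1 := Nat.lt_floor_add_one _
  have hA2 : 2 ≤ A := by
    have : (1:ℕ) < A := Nat.lt_ceil.mpr (by push_cast; linarith)
    omega
  have hB4 : 4 ≤ B := Nat.le_floor (by push_cast; linarith)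
  have hAB : A ≤ B := Nat.le_floor (by push_cast; linarith)
  have h2AB : 2 * A ≤ B + 2 := by
    have h1 : (2*A:ℝ) < (B:ℝ) + 3 := by push_cast; linarith
    have h2 : (2*A:ℕ) < B + 3 := by exact_mod_cast h1
    omega
  have hA0 : (0:ℝ) < A := by exact_mod_cast Nat.lt_of_lt_of_le (by norm_num) hA2
  have hB0 : (0:ℝ) < (B:ℝ) + 1 := by positivity
  -- u and v
  set u : ℝ := 1 / (A:ℝ) with hudef
  set v : ℝ := 1 / ((B:ℝ)+1) with hvdef
  have hv0 : 0 < v := by positivity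
  have hu0 : 0 < u := by positivity
  have hABr : (A:ℝ) ≤ (B:ℝ) := by exact_mod_cast hAB
  have hvu : v ≤ u := by
    rw [hudef, hvdef]
    apply one_div_le_one_div_of_le hA0
    linarith
  -- the Möbius map f
  set P : ℝ := (cfP b (m+1) : ℝ) with hPdef
  set P' : ℝ := (cfP b m : ℝ) with hP'def
  set f : ℝ → ℝ := fun θ => (P + P' * θ) / (Q + Q' * θ) with hfdef
  have hfMap : ∀ θ : ℝ, cfMap b (m+1) θ = f θ := fun θ => rfl
  have he : P' * Q - P * Q' = 1 ∨ P' * Q - P * Q' = -1 := by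
    have h := cf_det b m
    rcases Nat.even_or_odd m with hpar | hpar
    · right
      have h1 : ((-1:ℤ))^m = 1 := hpar.neg_one_pow
      rw [h1] at h
      have h2 : (cfP b m : ℤ) * cfQ b (m+1) - (cfP b (m+1) : ℤ) * cfQ b m = -1 := by linarith
      rw [hP'def, hPdef, hQdef, hQ'def]
      exact_mod_cast h2
    · left
      have h1 : ((-1:ℤ))^m = -1 := hpar.neg_one_pow
      rw [h1] at h
      have h2 : (cfP b m : ℤ) * cfQ b (m+1) - (cfP b (m+1) : ℤ) * cfQ b m = 1 := by linarith
      rw [hP'def, hPdef, hQdef, hQ'def]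
      exact_mod_cast h2
  -- per-j facts
  have hbj : ∀ j : ℕ, 1 ≤ j → ∀ i, 1 ≤ i → i ≤ m+2 → 1 ≤ Function.update b (m+2) j i := by
    intro j hj i h1 h2
    rcases eq_or_ne i (m+2) with h | h
    · rw [h, Function.update_self]; exact hj
    · rw [Function.update_of_ne h]; exact hb i h1 (by omega)
  have hmapj : ∀ j : ℕ, 1 ≤ j → ∀ θ : ℝ, 0 ≤ θ →
      cfMap (Function.update b (m+2) j) (m+2) θ = f (1/((j:ℝ) + θ)) := by
    intro j hj θ hθ
    have step := cfMap_succ (Function.update b (m+2) j) m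
      (fun i h1 h2 => by
        rw [Function.update_of_ne (by omega)]; exact hb i h1 (by omega))
      (by rw [Function.update_self]; exact hj) θ hθ
    rw [step, Function.update_self]
    have e1 : cfP (Function.update b (m+2) j) (m+1) = cfP b (m+1) :=
      cfP_congr _ _ (m+1) (fun i hi => Function.update_of_ne (by omega) _ _)
    have e2 : cfP (Function.update b (m+2) j) m = cfP b m :=
      cfP_congr _ _ m (fun i hi => Function.update_of_ne (by omega) _ _)
    have e3 : cfQ (Function.update b (m+2) j) (m+1) = cfQ b (m+1) :=
      cfQ_congr _ _ (m+1) (fun i hi => Function.update_of_ne (by omega) _ _)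
    have e4 : cfQ (Function.update b (m+2) j) m = cfQ b m :=
      cfQ_congr _ _ m (fun i hi => Function.update_of_ne (by omega) _ _)
    show ((cfP (Function.update b (m+2) j) (m+1) : ℝ) + (cfP (Function.update b (m+2) j) m : ℝ) * _) /
        ((cfQ (Function.update b (m+2) j) (m+1) : ℝ) + (cfQ (Function.update b (m+2) j) m : ℝ) * _) = _
    rw [e1, e2, e3, e4]
  -- upper inclusion
  have hup : J ⊆ f '' Icc v u := by
    intro x hx
    rw [hJdef] at hx
    simp only [mem_iUnion, mem_setOf_eq, exists_prop] at hx
    obtain ⟨j, ⟨hj1, hj2⟩, hxj⟩ := hx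
    have hjA : A ≤ j := Nat.ceil_le.mpr hj1
    have hjB : j ≤ B := Nat.le_floor hj2
    have hj1' : 1 ≤ j := by omega
    obtain ⟨hθ, hxeq⟩ := cyl_fwd (Function.update b (m+2) j) (m+2) (by omega)
      (hbj j hj1') x hxj
    set θ := gaussMap^[m+2] x with hθdef
    rw [hmapj j hj1' θ hθ.1] at hxeq
    have hjr1 : (1:ℝ) ≤ (j:ℝ) := by exact_mod_cast hj1'
    have hjrB : (j:ℝ) ≤ (B:ℝ) := by exact_mod_cast hjB
    have hjrA : (A:ℝ) ≤ (j:ℝ) := by exact_mod_cast hjA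
    refine ⟨1/((j:ℝ) + θ), ⟨?_, ?_⟩, hxeq.symm⟩
    · rw [hvdef]
      apply one_div_le_one_div_of_le (by linarith [hθ.1])
      linarith [hθ.2]
    · rw [hudef]
      apply one_div_le_one_div_of_le hA0
      linarith [hθ.1]
  -- lower inclusion
  set C : Set ℝ := Set.range (fun j : ℕ => ((j:ℝ))⁻¹) with hCdef
  have hlo : f '' Ioo v u ⊆ J ∪ f '' C := by
    rintro y ⟨θ, ⟨hθv, hθu⟩, rfl⟩
    have hθ0 : 0 < θ := lt_trans hv0 hθv
    have hinv0 : 0 < θ⁻¹ := by positivity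
    have hinv1 : (A:ℝ) < θ⁻¹ := by
      have : (A:ℝ) < 1/θ := (lt_div_iff₀ hθ0).mpr (by
        have := mul_lt_mul_of_pos_left hθu hA0
        rw [hudef] at this
        rw [mul_one_div, div_self hA0.ne'] at this
        linarith)
      rwa [one_div] at this
    have hinv2 : θ⁻¹ < (B:ℝ) + 1 := by
      have : 1/θ < (B:ℝ)+1 := (div_lt_iff₀ hθ0).mpr (by
        have := mul_lt_mul_of_pos_left hθv hB0
        rw [hvdef, mul_one_div, div_self hB0.ne'] at this
        linarith)
      rwa [one_div] at this
    set j : ℕ := ⌊θ⁻¹⌋₊ with hjdef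
    have hjA : A ≤ j := Nat.le_floor hinv1.le
    have hjB : j ≤ B := by
      have : j < B + 1 := by
        rw [hjdef]
        rw [Nat.floor_lt hinv0.le]
        push_cast
        exact hinv2
      omega
    have hj1 : 1 ≤ j := by omega
    have hfl1 : (j:ℝ) ≤ θ⁻¹ := Nat.floor_le hinv0.le
    have hfl2 : θ⁻¹ < (j:ℝ) + 1 := Nat.lt_floor_add_one _
    set θ' : ℝ := θ⁻¹ - (j:ℝ) with hθ'def
    have hθeq : θ = 1/((j:ℝ) + θ') := by
      rw [hθ'def, show (j:ℝ) + (θ⁻¹ - (j:ℝ)) = θ⁻¹ by ring, one_div, inv_inv]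
    rcases eq_or_lt_of_le (show (0:ℝ) ≤ θ' by rw [hθ'def]; linarith) with h0 | h0
    · right
      refine ⟨θ, ⟨j, ?_⟩, rfl⟩
      have hji : θ⁻¹ = (j:ℝ) := by rw [hθ'def] at h0; linarith
      show ((j:ℕ):ℝ)⁻¹ = θ
      rw [← hji, inv_inv]
    · left
      obtain ⟨hx01, _, hcfa⟩ := cfMap_mem (Function.update b (m+2) j) (m+2) (by omega)
        (hbj j hj1) θ' ⟨h0, by rw [hθ'def]; linarith⟩
      have hmem : cfMap (Function.update b (m+2) j) (m+2) θ' ∈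
          cfCyl (Function.update b (m+2) j) (m+2) := ⟨⟨hx01.1.le, hx01.2⟩, hcfa⟩
      have heq : cfMap (Function.update b (m+2) j) (m+2) θ' = f θ := by
        rw [hmapj j hj1 θ' h0.le, ← hθeq]
      rw [hJdef]
      simp only [mem_iUnion, mem_setOf_eq, exists_prop]
      refine ⟨j, ⟨?_, ?_⟩, ?_⟩
      · calc (1/4)*X ≤ (A:ℝ) := hAge
          _ ≤ (j:ℝ) := by exact_mod_cast hjA
      · calc (j:ℝ) ≤ (B:ℝ) := by exact_mod_cast hjB
          _ ≤ (1/2)*X := hBle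
      · rw [← heq]; exact hmem
  -- volume computations
  have hQ0 : (0:ℝ) < Q := by linarith
  have hQ'0 : (0:ℝ) ≤ Q' := by linarith
  have vol1 : volume (f '' Icc v u) =
      ENNReal.ofReal ((u - v) / ((Q + Q' * v) * (Q + Q' * u))) :=
    volume_moeb P P' Q Q' hQ0 hQ'0 he v u hv0.le hvu (Icc v u) Ioo_subset_Icc_self
      (subset_refl _)
  have vol2 : volume (f '' Ioo v u) =
      ENNReal.ofReal ((u - v) / ((Q + Q' * v) * (Q + Q' * u))) :=
    volume_moeb P P' Q Q' hQ0 hQ'0 he v u hv0.le hvu (Ioo v u) (subset_refl _)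
      Ioo_subset_Icc_self
  have hC0 : volume (f '' C) = 0 :=
    ((Set.countable_range _).image f).measure_zero volume
  have key : volume J = ENNReal.ofReal ((u - v) / ((Q + Q' * v) * (Q + Q' * u))) := by
    apply le_antisymm
    · rw [← vol1]; exact measure_mono hup
    · calc ENNReal.ofReal ((u - v) / ((Q + Q' * v) * (Q + Q' * u)))
          = volume (f '' Ioo v u) := vol2.symm
        _ ≤ volume (J ∪ f '' C) := measure_mono hlo
        _ ≤ volume J + volume (f '' C) := measure_union_le _ _
        _ = volume J := by rw [hC0, add_zero]
  -- numeric endgame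
  have hQT : (cfQ b (m+1) : ℝ) ^ (2 + τ) = Q^2 * X := by
    rw [hXdef, hQdef]
    rw [Real.rpow_add (by exact_mod_cast Nat.lt_of_lt_of_le Nat.zero_lt_one hQn)]
    congr 1
    rw [← Real.rpow_natCast (cfQ b (m+1) : ℝ) 2]
    norm_num
  have hW : (u - v) / ((Q + Q' * v) * (Q + Q' * u)) =
      (((B:ℝ)+1) - A) / (((A:ℝ)*Q + Q') * (((B:ℝ)+1)*Q + Q')) := by
    rw [hudef, hvdef]
    have h1 : (0:ℝ) < Q + Q' * (1/((B:ℝ)+1)) := by positivity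
    have h2 : (0:ℝ) < Q + Q' * (1/(A:ℝ)) := by positivity
    have h3 : (0:ℝ) < (A:ℝ)*Q + Q' := by positivity
    have h4 : (0:ℝ) < ((B:ℝ)+1)*Q + Q' := by positivity
    field_simp
  rw [key, hW, hQT]
  set a : ℝ := (A:ℝ) with hadef
  set β : ℝ := (B:ℝ) + 1 with hβdef
  clear_value X J Q Q' A B u v P P' f C a β
  have hβ5 : (5:ℝ) ≤ β := by
    have h4 : (4:ℝ) ≤ (B:ℝ) := by exact_mod_cast hB4
    rw [hβdef]
    linarith
  have haβ : a + 1 ≤ β := by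
    rw [hadef, hβdef]
    linarith
  have h2aβ : 2*a ≤ β + 1 := by
    rw [hadef, hβdef]
    have : (2*A:ℝ) ≤ (B:ℝ) + 2 := by exact_mod_cast h2AB
    linarith
  have hXβ : 2*(β - 1) ≤ X := by rw [hβdef]; linarith
  have hXa : X ≤ 4*a := by rw [hadef]; linarith
  have ha2 : (2:ℝ) ≤ a := by rw [hadef]; exact_mod_cast hA2
  have hX0' : (0:ℝ) < X := by linarith
  constructor
  · exact ENNReal.ofReal_le_ofReal
      (arith_low a β Q Q' X hQ hQ' hQ'Q hβ5 haβ h2aβ hXβ ha2)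
  · exact ENNReal.ofReal_le_ofReal
      (arith_high a β Q Q' X hQ hQ' hQ'Q hβ5 haβ hX0' hXa ha2)
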